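/- Let v ∈ ℝⁿ, and let v₊ = max(v, 0) and v₋ = max(−v, 0) denote the entrywise positive and negative parts of v. Then the following are equivalent for the matrix A = I − vvᵀ: (a) A is copositive; (b) A is SPN; (c) ‖v₋‖ ≤ 1 and ‖v₊‖ ≤ 1, where ‖·‖ denotes the Euclidean norm. -/

import Mathlib

open Matrix

/-- A real symmetric matrix `A` is *copositive* if `xᵀAx ≥ 0` for every
entrywise nonnegative vector `x`. -/
def Copositive {ι : Type*} [Fintype ι] (A : Matrix ι ι ℝ) : Prop :=
  ∀ x : ι → ℝ, (∀ i, 0 ≤ x i) → 0 ≤ x ⬝ᵥ A.mulVec x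

/-- A real symmetric matrix is *SPN* if it is the sum of a positive semidefinite
matrix and a symmetric entrywise nonnegative matrix. -/
def IsSPN {ι : Type*} [Fintype ι] (A : Matrix ι ι ℝ) : Prop :=
  ∃ P N : Matrix ι ι ℝ, P.PosSemidef ∧ N.IsSymm ∧ (∀ i j, 0 ≤ N i j) ∧ A = P + N

section Aux

variable {n : ℕ}

lemma aux_quad (w : Fin n → ℝ) (x : Fin n → ℝ) :
    x ⬝ᵥ (Matrix.vecMulVec w w).mulVec x = (w ⬝ᵥ x) ^ 2 := by
  have h : (Matrix.vecMulVec w w).mulVec x = (w ⬝ᵥ x) • w := by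
    ext i
    simp [Matrix.mulVec, Matrix.vecMulVec_apply, dotProduct, Finset.mul_sum,
      mul_assoc, mul_comm, mul_left_comm]
  rw [h, dotProduct_smul, dotProduct_comm, smul_eq_mul, sq]

lemma aux_quad_one (x : Fin n → ℝ) :
    x ⬝ᵥ (1 : Matrix (Fin n) (Fin n) ℝ).mulVec x = ∑ i, x i ^ 2 := by
  simp [Matrix.one_mulVec, dotProduct, sq]

end Aux

/-- For `v ∈ ℝⁿ` and `A = I - vvᵀ`, the following are equivalent:
(a) `A` is copositive; (b) `A` is SPN; (c) `‖v₋‖ ≤ 1` and `‖v₊‖ ≤ 1`. -/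
theorem one_sub_vecMulVec_copositive_iff_isSPN_iff_norms
    (n : ℕ) (v : Fin n → ℝ) :
    (Copositive ((1 : Matrix (Fin n) (Fin n) ℝ) - Matrix.vecMulVec v v) ↔
      IsSPN ((1 : Matrix (Fin n) (Fin n) ℝ) - Matrix.vecMulVec v v)) ∧
    (IsSPN ((1 : Matrix (Fin n) (Fin n) ℝ) - Matrix.vecMulVec v v) ↔
      (Real.sqrt (∑ i, max (-(v i)) 0 ^ 2) ≤ 1 ∧
        Real.sqrt (∑ i, max (v i) 0 ^ 2) ≤ 1)) := by
  set A : Matrix (Fin n) (Fin n) ℝ := 1 - Matrix.vecMulVec v v with hA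
  set p : Fin n → ℝ := fun i => max (v i) 0 with hp
  set m : Fin n → ℝ := fun i => max (-(v i)) 0 with hm
  have hp0 : ∀ i, 0 ≤ p i := fun i => le_max_right _ _
  have hm0 : ∀ i, 0 ≤ m i := fun i => le_max_right _ _
  have hv : ∀ i, v i = p i - m i := fun i =>
    (max_zero_sub_max_neg_zero_eq_self (v i)).symm
  have quad : ∀ x : Fin n → ℝ, x ⬝ᵥ A.mulVec x = (∑ i, x i ^ 2) - (v ⬝ᵥ x) ^ 2 := by
    intro x
    rw [hA, Matrix.sub_mulVec, dotProduct_sub, aux_quad, aux_quad_one]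
  -- (a) → (c)
  have hac : Copositive A →
      (Real.sqrt (∑ i, max (-(v i)) 0 ^ 2) ≤ 1 ∧
        Real.sqrt (∑ i, max (v i) 0 ^ 2) ≤ 1) := by
    intro h
    have hvp : v ⬝ᵥ p = ∑ i, p i ^ 2 := by
      apply Finset.sum_congr rfl
      intro i _
      rcases le_total (v i) 0 with h' | h'
      · simp [hp, max_eq_right h']
      · simp [hp, max_eq_left h', sq]
    have hvm : v ⬝ᵥ m = -∑ i, m i ^ 2 := by
      rw [← Finset.sum_neg_distrib]
      apply Finset.sum_congr rfl
      intro i _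
      rcases le_total (v i) 0 with h' | h'
      · have h1 : m i = -v i := max_eq_left (neg_nonneg.mpr h')
        rw [h1]; ring
      · have h1 : m i = 0 := max_eq_right (neg_nonpos.mpr h')
        rw [h1]; ring
    have h1 := h p hp0
    have h2 := h m hm0
    rw [quad, hvp] at h1
    rw [quad, hvm] at h2
    constructor
    · rw [Real.sqrt_le_one]
      nlinarith [Finset.sum_nonneg (fun i (_ : i ∈ Finset.univ) => sq_nonneg (m i))]
    · rw [Real.sqrt_le_one]
      nlinarith [Finset.sum_nonneg (fun i (_ : i ∈ Finset.univ) => sq_nonneg (p i))]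
  -- (c) → (b)
  have hcb : (Real.sqrt (∑ i, max (-(v i)) 0 ^ 2) ≤ 1 ∧
        Real.sqrt (∑ i, max (v i) 0 ^ 2) ≤ 1) → IsSPN A := by
    rintro ⟨hmn, hpn⟩
    rw [Real.sqrt_le_one] at hmn hpn
    refine ⟨1 - Matrix.vecMulVec p p - Matrix.vecMulVec m m,
      Matrix.vecMulVec p m + Matrix.vecMulVec m p, Matrix.PosSemidef.of_dotProduct_mulVec_nonneg ?_ ?_, ?_, ?_, ?_⟩
    · -- Hermitian
      ext i j
      simp only [Matrix.conjTranspose_apply, Matrix.sub_apply, Matrix.one_apply,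
        Matrix.vecMulVec_apply, star_trivial]
      rcases eq_or_ne i j with rfl | hij
      · ring
      · simp [hij, Ne.symm hij]; ring
    · -- PSD part
      intro x
      have hsx : star x = x := by ext i; simp
      rw [hsx, Matrix.sub_mulVec, Matrix.sub_mulVec, dotProduct_sub,
        dotProduct_sub, aux_quad, aux_quad, aux_quad_one]
      set y : Fin n → ℝ := fun i => if 0 ≤ v i then x i else 0 with hy
      set z : Fin n → ℝ := fun i => if 0 ≤ v i then 0 else x i with hz
      have hpy : p ⬝ᵥ x = ∑ i, p i * y i := by
        apply Finset.sum_congr rfl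
        intro i _
        by_cases h' : 0 ≤ v i
        · simp [hy, h']
        · have hpi : p i = 0 := max_eq_right (le_of_not_ge h')
          simp [hpi]
      have hmz : m ⬝ᵥ x = ∑ i, m i * z i := by
        apply Finset.sum_congr rfl
        intro i _
        by_cases h' : 0 ≤ v i
        · simp [hm, hz, h', max_eq_right (neg_nonpos.mpr h')]
        · simp [hz, h']
      have hyz : ∑ i, y i ^ 2 + ∑ i, z i ^ 2 = ∑ i, x i ^ 2 := by
        rw [← Finset.sum_add_distrib]
        apply Finset.sum_congr rfl
        intro i _
        by_cases h' : 0 ≤ v i <;> simp [hy, hz, h']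
      have cs1 : (∑ i, p i * y i) ^ 2 ≤ (∑ i, p i ^ 2) * ∑ i, y i ^ 2 :=
        Finset.sum_mul_sq_le_sq_mul_sq _ _ _
      have cs2 : (∑ i, m i * z i) ^ 2 ≤ (∑ i, m i ^ 2) * ∑ i, z i ^ 2 :=
        Finset.sum_mul_sq_le_sq_mul_sq _ _ _
      have hy0 : (0:ℝ) ≤ ∑ i, y i ^ 2 :=
        Finset.sum_nonneg fun i _ => sq_nonneg _
      have hz0 : (0:ℝ) ≤ ∑ i, z i ^ 2 :=
        Finset.sum_nonneg fun i _ => sq_nonneg _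
      rw [dotProduct_comm p x, dotProduct_comm m x] at *
      rw [hpy, hmz]
      nlinarith [mul_le_of_le_one_left hy0 hpn, mul_le_of_le_one_left hz0 hmn]
    · -- N symmetric
      ext i j
      simp [Matrix.transpose_apply, Matrix.vecMulVec_apply]
      ring
    · -- N nonneg
      intro i j
      simp only [Matrix.add_apply, Matrix.vecMulVec_apply]
      have := hp0 i; have := hp0 j; have := hm0 i; have := hm0 j
      positivity
    · -- decomposition
      ext i j
      simp only [hA, Matrix.sub_apply, Matrix.add_apply, Matrix.vecMulVec_apply]
      rw [hv i, hv j]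
      ring
  -- (b) → (a)
  have hba : IsSPN A → Copositive A := by
    rintro ⟨P, N, hP, _, hN, hAPN⟩ x hx
    rw [hAPN, Matrix.add_mulVec, dotProduct_add]
    have h1 : 0 ≤ x ⬝ᵥ P.mulVec x := by
      have := hP.dotProduct_mulVec_nonneg x
      have hsx : star x = x := by ext i; simp
      rwa [hsx] at this
    have h2 : 0 ≤ x ⬝ᵥ N.mulVec x := by
      simp only [dotProduct, Matrix.mulVec]
      exact Finset.sum_nonneg fun i _ => mul_nonneg (hx i)
        (Finset.sum_nonneg fun j _ => mul_nonneg (hN i j) (hx j))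
    linarith
  exact ⟨⟨fun h => hcb (hac h), hba⟩, ⟨fun h => hac (hba h), hcb⟩⟩
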